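/- Let A be an operator on a complex Hilbert space whose spectrum is nonempty and consists of isolated eigenvalues of finite algebraic multiplicity, and let b, c ∈ Z define a minimal system (no invariant zero of (A,b,c) is in σ(A)). If a branch f : [0, ∞) → ℂ of the root locus (so G(f(k)) = -1/k for k > 0 and f is continuous) has two convergent subsequences f(y_l) → f_y and f(z_l) → f_z with y_l, z_l → ∞, then f_y = f_z; i.e. any bounded branch of the root locus converges to a single transmission zero. -/

import Mathlib

open Set Filter Topology

private lemma isOpen_compl_of_acc (S : Set ℂ)
    (hSacc : ∀ w : ℂ, ¬ AccPt w (Filter.principal S)) : IsOpen Sᶜ := by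
  rw [isOpen_iff_mem_nhds]
  intro w hw
  have h := hSacc w
  rw [accPt_iff_nhds] at h
  push_neg at h
  obtain ⟨U, hU, hUS⟩ := h
  filter_upwards [hU] with x hx hxS
  have := hUS x ⟨hx, hxS⟩
  exact hw (this ▸ hxS)

private lemma key_lemma (S : Set ℂ)
    (hSacc : ∀ w : ℂ, ¬ AccPt w (Filter.principal S))
    (G : ℂ → ℂ) (hG : DifferentiableOn ℂ G Sᶜ)
    (hpole : ∀ lam ∈ S, Tendsto (fun s => ‖G s‖) (nhdsWithin lam Sᶜ) atTop)
    (u : ℕ → ℂ) (k : ℕ → ℝ) (hk0 : ∀ n, 0 < k n) (hk : Tendsto k atTop atTop)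
    (hGu : ∀ n, G (u n) = -1 / (k n : ℂ)) (w : ℂ)
    (hu : Tendsto u atTop (nhds w)) : w ∉ S ∧ G w = 0 := by
  have hval : Tendsto (fun n => G (u n)) atTop (𝓝 0) := by
    have h1 : Tendsto (fun n => (-1 / k n : ℝ)) atTop (𝓝 0) := by
      simpa [neg_div, one_div] using (hk.inv_tendsto_atTop).neg
    have h2 : Tendsto (fun n => ((-1 / k n : ℝ) : ℂ)) atTop (𝓝 ((0 : ℝ) : ℂ)) :=
      (Complex.continuous_ofReal.tendsto _).comp h1
    have : (fun n => G (u n)) = fun n => ((-1 / k n : ℝ) : ℂ) := by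
      funext n; rw [hGu n]; push_cast; ring
    rw [this]; simpa using h2
  have hwS : w ∉ S := by
    intro hw
    have hne : ∀ᶠ n in atTop, u n ≠ w := by
      by_contra h
      rw [Filter.not_eventually] at h
      obtain ⟨φ, hφ, heq⟩ := Filter.extraction_of_frequently_atTop (by simpa using h)
      have htend : Tendsto (fun n => G (u (φ n))) atTop (𝓝 0) :=
        hval.comp hφ.tendsto_atTop
      have hconst : (fun n => G (u (φ n))) = fun _ => G w := by
        funext n; rw [heq n]
      rw [hconst] at htend
      have hGw : G w = 0 := tendsto_nhds_unique tendsto_const_nhds htend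
      have h0 := hGu (φ 0)
      rw [heq 0, hGw] at h0
      have : (k (φ 0) : ℂ) ≠ 0 := by
        exact_mod_cast ne_of_gt (hk0 (φ 0))
      field_simp at h0
      norm_num at h0
    have h := hSacc w
    rw [accPt_iff_nhds] at h
    push_neg at h
    obtain ⟨U, hU, hUS⟩ := h
    have hmemU : ∀ᶠ n in atTop, u n ∈ U := hu hU
    have hmem : ∀ᶠ n in atTop, u n ∈ Sᶜ := by
      filter_upwards [hne, hmemU] with n hn hUn
      intro hSn
      exact hn (hUS _ ⟨hUn, hSn⟩)
    have htend : Tendsto u atTop (nhdsWithin w Sᶜ) :=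
      tendsto_nhdsWithin_of_tendsto_nhds_of_eventually_within u hu hmem
    have hbig := (hpole w hw).comp htend
    have hsmall : Tendsto (fun n => ‖G (u n)‖) atTop (𝓝 0) := by
      simpa using hval.norm
    have h1 : ∀ᶠ n in atTop, 1 ≤ ‖G (u n)‖ := hbig.eventually (eventually_ge_atTop 1)
    have h2 : ∀ᶠ n in atTop, ‖G (u n)‖ < 1 := hsmall.eventually (gt_mem_nhds one_pos)
    obtain ⟨n, hn1, hn2⟩ := (h1.and h2).exists
    linarith
  refine ⟨hwS, ?_⟩
  have hopen := isOpen_compl_of_acc S hSacc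
  have hcont : ContinuousAt G w :=
    (hG.continuousOn.continuousAt (hopen.mem_nhds hwS))
  have : Tendsto (fun n => G (u n)) atTop (𝓝 (G w)) := hcont.tendsto.comp hu
  exact tendsto_nhds_unique this hval

/-- Let `S` be a nonempty countable set without finite accumulation points
(the spectrum of `A`), and `G` holomorphic off `S` with each point of `S` a pole
(by minimality).  If `f : [0,∞) → ℂ` is a continuous root-locus branch with
`G (f k) = -1/k` for `k > 0`, and two subsequences `f (y l) → f_y`, `f (z l) → f_z` with
`y l, z l → ∞`, then `f_y = f_z`: a bounded branch converges to a single transmission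
zero. -/
theorem stmt17 (S : Set ℂ) (hSne : S.Nonempty) (hScnt : S.Countable)
    (hSacc : ∀ w : ℂ, ¬ AccPt w (Filter.principal S))
    (G : ℂ → ℂ) (hG : DifferentiableOn ℂ G Sᶜ)
    (hpole : ∀ lam ∈ S, Tendsto (fun s => ‖G s‖) (nhdsWithin lam Sᶜ) atTop)
    (f : ℝ → ℂ) (hf : ContinuousOn f (Ici 0))
    (hGf : ∀ k : ℝ, 0 < k → G (f k) = -1 / (k : ℂ))
    (y z : ℕ → ℝ) (hy0 : ∀ l, 0 < y l) (hz0 : ∀ l, 0 < z l)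
    (hy : Tendsto y atTop atTop) (hz : Tendsto z atTop atTop)
    (fy fz : ℂ)
    (hfy : Tendsto (fun l => f (y l)) atTop (nhds fy))
    (hfz : Tendsto (fun l => f (z l)) atTop (nhds fz)) :
    fy = fz := by
  by_contra hne
  have Hy := key_lemma S hSacc G hG hpole (fun l => f (y l)) y hy0 hy
    (fun l => hGf (y l) (hy0 l)) fy hfy
  have Hz := key_lemma S hSacc G hG hpole (fun l => f (z l)) z hz0 hz
    (fun l => hGf (z l) (hz0 l)) fz hfz
  set d := ‖fz - fy‖ with hd_def
  have hd : 0 < d := by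
    rw [hd_def, norm_pos_iff, sub_ne_zero]
    exact fun h => hne h.symm
  -- a zero of G on each sphere of radius r ∈ (0, d) around fy
  have hzero : ∀ r : ℝ, 0 < r → r < d → ∃ w, G w = 0 ∧ ‖w - fy‖ = r := by
    intro r hr hrd
    have hny : Tendsto (fun l => ‖f (y l) - fy‖) atTop (𝓝 0) := by
      have := (hfy.sub_const fy).norm
      simpa using this
    have hnz : Tendsto (fun l => ‖f (z l) - fy‖) atTop (𝓝 d) := (hfz.sub_const fy).norm
    have h1 : ∀ᶠ l in atTop, ‖f (y l) - fy‖ < r := hny.eventually (gt_mem_nhds hr)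
    have h2 : ∀ᶠ l in atTop, r < ‖f (z l) - fy‖ := hnz.eventually (lt_mem_nhds hrd)
    obtain ⟨N, hN⟩ := Filter.eventually_atTop.1 (h1.and h2)
    have hsel : ∀ l : ℕ, ∃ kk, kk ∈ Set.uIcc (y (l + N)) (z (l + N)) ∧ ‖f kk - fy‖ = r := by
      intro l
      have hp := hN (l + N) (Nat.le_add_left N l)
      have hsub : Set.uIcc (y (l + N)) (z (l + N)) ⊆ Set.Ici (0 : ℝ) := by
        intro x hx
        rcases Set.mem_uIcc.1 hx with ⟨hx1, _⟩ | ⟨hx1, _⟩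
        · exact le_trans (hy0 (l + N)).le hx1
        · exact le_trans (hz0 (l + N)).le hx1
      have hcont : ContinuousOn (fun kk => ‖f kk - fy‖)
          (Set.uIcc (y (l + N)) (z (l + N))) :=
        ((hf.mono hsub).sub continuousOn_const).norm
      have hrmem : r ∈ Set.uIcc (‖f (y (l + N)) - fy‖) (‖f (z (l + N)) - fy‖) :=
        Set.mem_uIcc.2 (Or.inl ⟨hp.1.le, hp.2.le⟩)
      obtain ⟨kk, hkk, hkkr⟩ := intermediate_value_uIcc hcont hrmem
      exact ⟨kk, hkk, hkkr⟩
    choose kk hkk1 hkk2 using hsel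
    have hkkmin : ∀ l, min (y (l + N)) (z (l + N)) ≤ kk l := by
      intro l
      rcases Set.mem_uIcc.1 (hkk1 l) with ⟨hx1, _⟩ | ⟨hx1, _⟩
      · exact le_trans (min_le_left _ _) hx1
      · exact le_trans (min_le_right _ _) hx1
    have hkkpos : ∀ l, 0 < kk l := fun l =>
      lt_of_lt_of_le (lt_min (hy0 _) (hz0 _)) (hkkmin l)
    have hmintop : Tendsto (fun l => min (y (l + N)) (z (l + N))) atTop atTop := by
      have hyt : Tendsto (fun l => y (l + N)) atTop atTop := hy.comp (tendsto_add_atTop_nat N)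
      have hzt : Tendsto (fun l => z (l + N)) atTop atTop := hz.comp (tendsto_add_atTop_nat N)
      rw [tendsto_atTop] at hyt hzt ⊢
      intro b
      filter_upwards [hyt b, hzt b] with l h1 h2
      exact le_min h1 h2
    have hkktop : Tendsto kk atTop atTop := tendsto_atTop_mono hkkmin hmintop
    have hsph : ∀ l, f (kk l) ∈ Metric.sphere fy r := by
      intro l
      simpa [Metric.mem_sphere, dist_eq_norm] using hkk2 l
    obtain ⟨w, hwsph, φ, hφ, hwt⟩ := (isCompact_sphere fy r).tendsto_subseq hsph
    have hkey := key_lemma S hSacc G hG hpole (fun m => f (kk (φ m))) (fun m => kk (φ m))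
      (fun m => hkkpos _) (hkktop.comp hφ.tendsto_atTop)
      (fun m => hGf _ (hkkpos _)) w hwt
    refine ⟨w, hkey.2, ?_⟩
    simpa [Metric.mem_sphere, dist_eq_norm] using hwsph
  -- zeros of G accumulate at fy
  have hfreq : ∃ᶠ x in 𝓝[≠] fy, G x = 0 := by
    have hr : ∀ n : ℕ, 0 < min (d / 2) (1 / (n + 1) : ℝ) := fun n =>
      lt_min (by linarith) (by positivity)
    have hr' : ∀ n : ℕ, min (d / 2) (1 / (n + 1) : ℝ) < d := fun n =>
      lt_of_le_of_lt (min_le_left _ _) (by linarith)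
    choose w hw1 hw2 using fun n : ℕ => hzero _ (hr n) (hr' n)
    have hwlim : Tendsto w atTop (𝓝 fy) := by
      rw [tendsto_iff_norm_sub_tendsto_zero]
      have hb : Tendsto (fun n : ℕ => (1 / (n + 1) : ℝ)) atTop (𝓝 0) :=
        tendsto_one_div_add_atTop_nhds_zero_nat
      have : Tendsto (fun n : ℕ => min (d / 2) (1 / (n + 1) : ℝ)) atTop (𝓝 0) := by
        apply squeeze_zero (fun n => (hr n).le) (fun n => min_le_right _ _) hb
      simpa [hw2] using this
    have hwne : ∀ n, w n ≠ fy := by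
      intro n h
      have := hw2 n
      rw [h, sub_self, norm_zero] at this
      exact absurd this.symm (ne_of_gt (hr n))
    have hwt : Tendsto w atTop (𝓝[≠] fy) :=
      tendsto_nhdsWithin_of_tendsto_nhds_of_eventually_within w hwlim
        (Filter.Eventually.of_forall hwne)
    exact hwt.frequently (Filter.Eventually.frequently (Filter.Eventually.of_forall hw1))
  -- identity theorem: G vanishes on Sᶜ
  have hopen := isOpen_compl_of_acc S hSacc
  have hpre : IsPreconnected Sᶜ := by
    have h2 : (1 : Cardinal) < Module.rank ℝ ℂ := by
      rw [Complex.rank_real_complex]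
      exact_mod_cast one_lt_two
    exact (hScnt.isPathConnected_compl_of_one_lt_rank h2).isConnected.isPreconnected
  have hA : AnalyticOnNhd ℂ G Sᶜ := hG.analyticOnNhd hopen
  have hEq : Set.EqOn G 0 Sᶜ :=
    hA.eqOn_zero_of_preconnected_of_frequently_eq_zero hpre Hy.1 hfreq
  -- contradiction with the pole at some point of S
  obtain ⟨lam, hlam⟩ := hSne
  have h1 : ∀ᶠ s in nhdsWithin lam Sᶜ, 1 ≤ ‖G s‖ :=
    (hpole lam hlam).eventually (eventually_ge_atTop 1)
  have h2 : ∀ᶠ s in nhdsWithin lam Sᶜ, s ∈ Sᶜ := eventually_mem_nhdsWithin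
  have hnb : (nhdsWithin lam Sᶜ).NeBot := by
    have h := hSacc lam
    rw [accPt_iff_nhds] at h
    push_neg at h
    obtain ⟨U, hU, hUS⟩ := h
    have hsub : ({lam}ᶜ ∩ U : Set ℂ) ⊆ Sᶜ := by
      intro x ⟨hx1, hx2⟩ hxS
      exact hx1 (hUS x ⟨hx2, hxS⟩)
    have : nhdsWithin lam ({lam}ᶜ ∩ U) ≤ nhdsWithin lam Sᶜ := nhdsWithin_mono _ hsub
    rw [← nhdsWithin_restrict' _ hU] at this
    exact Filter.neBot_of_le this
  obtain ⟨s, hs1, hs2⟩ := (h1.and h2).exists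
  have := hEq hs2
  rw [this] at hs1
  norm_num at hs1
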